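/- Let M be an N×N primitive nonnegative real matrix with primitivity index ℓ, let τ := τ(M^ℓ) be the Birkhoff coefficient of M^ℓ, ρ_M the Perron eigenvalue, v_M ∈ Δ_N the right Perron eigenvector and w_M the left Perron eigenvector with w_M^⊤ v_M = 1. Then for every x ∈ Δ_N, every m ∈ ℕ and every coordinate i: exp(−τ^{⌊m/ℓ⌋}·d_M(x)/(1−τ)) ≤ (M^m x)(i) / (ρ_M^m·(w_M^⊤ x)·v_M(i)) ≤ exp(τ^{⌊m/ℓ⌋}·d_M(x)/(1−τ)), where d_M(x) := min(ℓ·d(x, F_M x), d(x, F_M^ℓ x)). -/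

import Mathlib

open scoped BigOperators

namespace PerronApprox

/-- The open simplex `Δ_N`. -/
def simplex (N : ℕ) : Set (Fin N → ℝ) :=
  {x | (∀ i, 0 < x i) ∧ ∑ i, x i = 1}

/-- The projective (Hilbert) distance. -/
noncomputable def projDist {N : ℕ} (x y : Fin N → ℝ) : ℝ :=
  Real.log ((⨆ i, x i / y i) / (⨅ i, x i / y i))

/-- The normalized action `F_M x = Mx / |Mx|₁` of a matrix on the simplex. -/
noncomputable def FM {N : ℕ} (M : Matrix (Fin N) (Fin N) ℝ) (x : Fin N → ℝ) :
    Fin N → ℝ :=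
  fun i => M.mulVec x i / ∑ j, M.mulVec x j

open Classical in
/-- `Γ(M)` for a positive matrix (and `0` otherwise). -/
noncomputable def birkGamma {N : ℕ} (M : Matrix (Fin N) (Fin N) ℝ) : ℝ :=
  if ∀ i j, 0 < M i j then
    ⨅ i, ⨅ j, ⨅ k, ⨅ l, Real.sqrt (M i j * M k l / (M i l * M k j))
  else 0

/-- The Birkhoff contraction coefficient `τ(M) = (1 − Γ(M))/(1 + Γ(M))`. -/
noncomputable def birkTau {N : ℕ} (M : Matrix (Fin N) (Fin N) ℝ) : ℝ :=
  (1 - birkGamma M) / (1 + birkGamma M)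

/-- `d_M(x) = min (ℓ · d(x, F_M x), d(x, F_M^ℓ x))`. -/
noncomputable def dMin {N : ℕ} (M : Matrix (Fin N) (Fin N) ℝ) (ℓ : ℕ)
    (x : Fin N → ℝ) : ℝ :=
  min ((ℓ : ℝ) * projDist x (FM M x)) (projDist x ((FM M)^[ℓ] x))

/-- `M` is primitive with primitivity index `ℓ`. -/
def PrimIndex {N : ℕ} (M : Matrix (Fin N) (Fin N) ℝ) (ℓ : ℕ) : Prop :=
  0 < ℓ ∧ (∀ i j, 0 < (M ^ ℓ) i j) ∧
    ∀ k, 0 < k → k < ℓ → ¬ ∀ i j, 0 < (M ^ k) i j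



variable {N : ℕ}

def Pos {N : ℕ} (x : Fin N → ℝ) : Prop := ∀ i, 0 < x i

lemma le_sup (f : Fin N → ℝ) (i : Fin N) : f i ≤ ⨆ j, f j :=
  le_ciSup ((Set.finite_range f).bddAbove) i

lemma inf_le' (f : Fin N → ℝ) (i : Fin N) : (⨅ j, f j) ≤ f i :=
  ciInf_le ((Set.finite_range f).bddBelow) i

lemma inf_pos [Nonempty (Fin N)] {f : Fin N → ℝ} (h : ∀ i, 0 < f i) :
    0 < ⨅ i, f i := by
  obtain ⟨i0, hi0⟩ := Finite.exists_min f
  exact lt_of_lt_of_le (h i0) (le_ciInf hi0)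

lemma sup_pos' [Nonempty (Fin N)] {f : Fin N → ℝ} (h : ∀ i, 0 < f i) :
    0 < ⨆ i, f i := by
  have i0 : Fin N := Classical.arbitrary _
  exact lt_of_lt_of_le (h i0) (le_sup f i0)

lemma exp_projDist [Nonempty (Fin N)] {x y : Fin N → ℝ} (hx : Pos x) (hy : Pos y) :
    Real.exp (projDist x y) = (⨆ i, x i / y i) / (⨅ i, x i / y i) := by
  have hI : 0 < ⨅ i, x i / y i := inf_pos (fun i => div_pos (hx i) (hy i))
  have hS : 0 < ⨆ i, x i / y i := sup_pos' (fun i => div_pos (hx i) (hy i))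
  exact Real.exp_log (div_pos hS hI)

/-- master upper bound -/
lemma pd_le [Nonempty (Fin N)] {x y : Fin N → ℝ} (hx : Pos x) (hy : Pos y) {c : ℝ}
    (h : ∀ i k, x i * y k ≤ Real.exp c * (y i * x k)) : projDist x y ≤ c := by
  have hI : 0 < ⨅ i, x i / y i := inf_pos (fun i => div_pos (hx i) (hy i))
  have hS0 : 0 < ⨆ i, x i / y i := sup_pos' (fun i => div_pos (hx i) (hy i))
  have hE : (0:ℝ) < Real.exp c := Real.exp_pos c
  have h1 : ∀ k, (⨆ i, x i / y i) ≤ Real.exp c * (x k / y k) := by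
    intro k
    apply ciSup_le
    intro i
    rw [mul_div_assoc' (Real.exp c) (x k) (y k), div_le_div_iff₀ (hy i) (hy k)]
    calc x i * y k ≤ Real.exp c * (y i * x k) := h i k
      _ = Real.exp c * x k * y i := by ring
  have h2 : (⨆ i, x i / y i) / Real.exp c ≤ ⨅ i, x i / y i := by
    apply le_ciInf
    intro k
    rw [div_le_iff₀ hE]
    calc (⨆ i, x i / y i) ≤ Real.exp c * (x k / y k) := h1 k
      _ = x k / y k * Real.exp c := by ring
  have hS : (⨆ i, x i / y i) ≤ Real.exp c * ⨅ i, x i / y i := by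
    rw [div_le_iff₀ hE] at h2
    linarith [h2]
  have hfin : (⨆ i, x i / y i) / (⨅ i, x i / y i) ≤ Real.exp c := by
    rw [div_le_iff₀ hI]; linarith [hS]
  calc projDist x y ≤ Real.log (Real.exp c) := by
        apply Real.log_le_log (div_pos hS0 hI) hfin
    _ = c := Real.log_exp c

/-- master entrywise spec -/
lemma pd_spec [Nonempty (Fin N)] {x y : Fin N → ℝ} (hx : Pos x) (hy : Pos y) :
    ∀ i k, x i * y k ≤ Real.exp (projDist x y) * (y i * x k) := by
  intro i k
  have hI : 0 < ⨅ j, x j / y j := inf_pos (fun j => div_pos (hx j) (hy j))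
  rw [exp_projDist hx hy]
  have h1 : x i / y i ≤ ⨆ j, x j / y j := le_sup (fun j => x j / y j) i
  have h2 : (⨅ j, x j / y j) ≤ x k / y k := inf_le' (fun j => x j / y j) k
  have e1 : x i ≤ (⨆ j, x j / y j) * y i := by
    rw [← div_le_iff₀ (hy i)]; exact h1
  have e2 : (⨅ j, x j / y j) * y k ≤ x k := by
    rw [← le_div_iff₀ (hy k)]; exact h2
  rw [div_mul_eq_mul_div, le_div_iff₀ hI]
  calc x i * y k * (⨅ j, x j / y j) = x i * ((⨅ j, x j / y j) * y k) := by ring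
    _ ≤ x i * x k := mul_le_mul_of_nonneg_left e2 (hx i).le
    _ ≤ ((⨆ j, x j / y j) * y i) * x k := mul_le_mul_of_nonneg_right e1 (hx k).le
    _ = (⨆ j, x j / y j) * (y i * x k) := by ring

lemma projDist_nonneg [Nonempty (Fin N)] {x y : Fin N → ℝ} (hx : Pos x) (hy : Pos y) :
    0 ≤ projDist x y := by
  have i0 : Fin N := Classical.arbitrary _
  have hI : 0 < ⨅ j, x j / y j := inf_pos (fun j => div_pos (hx j) (hy j))
  apply Real.log_nonneg
  rw [le_div_iff₀ hI, one_mul]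
  exact le_trans (inf_le' (fun j => x j / y j) i0) (le_sup (fun j => x j / y j) i0)

lemma projDist_self [Nonempty (Fin N)] {x : Fin N → ℝ} (hx : Pos x) :
    projDist x x ≤ 0 := by
  apply pd_le hx hx
  intro i k
  rw [Real.exp_zero]
  nlinarith [hx i, hx k]

lemma projDist_triangle [Nonempty (Fin N)] {x y z : Fin N → ℝ}
    (hx : Pos x) (hy : Pos y) (hz : Pos z) :
    projDist x z ≤ projDist x y + projDist y z := by
  apply pd_le hx hz
  intro i k
  rw [Real.exp_add]
  have s1 := pd_spec hx hy i k
  have s2 := pd_spec hy hz i k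
  have e1 := Real.exp_pos (projDist x y)
  have e2 := Real.exp_pos (projDist y z)
  have m1 : (x i * y k) * (y i * z k) ≤
      (Real.exp (projDist x y) * (y i * x k)) * (Real.exp (projDist y z) * (z i * y k)) := by
    apply mul_le_mul s1 s2 (mul_pos (hy i) (hz k)).le
    exact mul_nonneg e1.le (mul_nonneg (hy i).le (hx k).le)
  have hyik : (0:ℝ) < y i * y k := mul_pos (hy i) (hy k)
  have m2 : (x i * z k) * (y i * y k) ≤
      (Real.exp (projDist x y) * Real.exp (projDist y z) * (z i * x k)) * (y i * y k) := by
    nlinarith [m1]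
  exact le_of_mul_le_mul_right m2 hyik

lemma projDist_smul_right [Nonempty (Fin N)] {x y : Fin N → ℝ} (hx : Pos x) (hy : Pos y)
    {c : ℝ} (hc : 0 < c) : projDist x (c • y) = projDist x y := by
  have hcy : Pos (c • y) := fun i => mul_pos hc (hy i)
  apply le_antisymm
  · apply pd_le hx hcy
    intro i k
    have hs := pd_spec hx hy i k
    have h2 : c * (x i * y k) ≤ c * (Real.exp (projDist x y) * (y i * x k)) :=
      mul_le_mul_of_nonneg_left hs hc.le
    calc x i * (c • y) k = c * (x i * y k) := by
          simp only [Pi.smul_apply, smul_eq_mul]; ring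
      _ ≤ c * (Real.exp (projDist x y) * (y i * x k)) := h2
      _ = Real.exp (projDist x y) * ((c • y) i * x k) := by
          simp only [Pi.smul_apply, smul_eq_mul]; ring
  · apply pd_le hx hy
    intro i k
    have hs := pd_spec hx hcy i k
    simp only [Pi.smul_apply, smul_eq_mul] at hs
    have h2 : c * (x i * y k) ≤ c * (Real.exp (projDist x (c • y)) * (y i * x k)) := by
      nlinarith [hs]
    exact le_of_mul_le_mul_left h2 hc


lemma log_key {k s : ℝ} (hk : 1 ≤ k) (hs : 1 ≤ s) :
    Real.log (s * k + 1) - Real.log (s + k) ≤ (k - 1) / (k + 1) * Real.log s := by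
  have hk0 : (0:ℝ) < k := lt_of_lt_of_le one_pos hk
  set τ := (k - 1) / (k + 1) with hτ
  set g : ℝ → ℝ := fun t => τ * Real.log t + Real.log (t + k) - Real.log (t * k + 1)
    with hg
  have hpos : ∀ t : ℝ, 1 ≤ t → 0 < t ∧ 0 < t + k ∧ 0 < t * k + 1 := by
    intro t ht
    refine ⟨by linarith, by linarith, by nlinarith⟩
  have hderiv : ∀ t : ℝ, t ∈ Set.Ioi (1:ℝ) →
      HasDerivAt g (τ * t⁻¹ + 1/(t+k) - k/(t*k+1)) t := by
    intro t ht
    have ht1 : (1:ℝ) < t := ht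
    obtain ⟨h0, h1, h2⟩ := hpos t ht1.le
    have d1 : HasDerivAt (fun t : ℝ => τ * Real.log t) (τ * t⁻¹) t :=
      (Real.hasDerivAt_log h0.ne').const_mul τ
    have d2 : HasDerivAt (fun t : ℝ => Real.log (t + k)) (1/(t+k)) t := by
      have : HasDerivAt (fun t : ℝ => t + k) 1 t := (hasDerivAt_id t).add_const k
      simpa using this.log h1.ne'
    have d3 : HasDerivAt (fun t : ℝ => Real.log (t * k + 1)) (k/(t*k+1)) t := by
      have : HasDerivAt (fun t : ℝ => t * k + 1) k t := by
        simpa using ((hasDerivAt_id t).mul_const k).add_const 1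
      simpa using this.log h2.ne'
    exact (d1.add d2).sub d3
  have hcont : ContinuousOn g (Set.Ici (1:ℝ)) := by
    apply ContinuousOn.sub
    apply ContinuousOn.add
    · apply continuousOn_const.mul
      apply ContinuousOn.log continuousOn_id
      intro t ht
      exact ne_of_gt (hpos t ht).1
    · apply ContinuousOn.log (continuousOn_id.add continuousOn_const)
      intro t ht
      exact ne_of_gt (hpos t ht).2.1
    · apply ContinuousOn.log ((continuousOn_id.mul continuousOn_const).add continuousOn_const)
      intro t ht
      exact ne_of_gt (hpos t ht).2.2
  have hmono : MonotoneOn g (Set.Ici (1:ℝ)) := by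
    apply monotoneOn_of_deriv_nonneg (convex_Ici 1) hcont
    · intro t ht
      rw [interior_Ici] at ht
      exact ((hderiv t ht).differentiableAt).differentiableWithinAt
    · intro t ht
      rw [interior_Ici] at ht
      rw [(hderiv t ht).deriv]
      have ht1 : (1:ℝ) < t := ht
      obtain ⟨h0, h1, h2⟩ := hpos t ht1.le
      have heq : τ * t⁻¹ + 1/(t+k) - k/(t*k+1)
          = ((k-1)*(k*(t-1)^2))/((k+1)*(t*((t+k)*(t*k+1)))) := by
        rw [hτ]
        field_simp
        ring
      rw [heq]
      apply div_nonneg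
      · have : (0:ℝ) ≤ (k-1) := by linarith
        positivity
      · positivity
  have h1mem : (1:ℝ) ∈ Set.Ici (1:ℝ) := Set.self_mem_Ici
  have hsmem : s ∈ Set.Ici (1:ℝ) := hs
  have := hmono h1mem hsmem hs
  have hg1 : g 1 = 0 := by
    simp only [hg, Real.log_one, mul_zero, one_mul]
    ring_nf
  rw [hg1] at this
  simp only [hg] at this
  linarith

lemma core_lemma {a s k P P' T : ℝ} (ha : 0 < a) (hs1 : 1 ≤ s) (hk : 1 ≤ k)
    (hP : 0 ≤ P) (hP' : 0 ≤ P') (key : (s*k+1)^2 ≤ T * (s+k)^2) :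
    (a*s^2*P + a*P')*(P + k^2*P') ≤ T * ((P+P')*(a*s^2*P + a*k^2*P')) := by
  have hs0 : (0:ℝ) < s := lt_of_lt_of_le one_pos hs1
  have hk0 : (0:ℝ) < k := lt_of_lt_of_le one_pos hk
  have e1 : (a*s^2*P + a*P')*(P + k^2*P')*(s+k)^2
      ≤ (s*k+1)^2 * (a * ((P+P')*(s^2*P + k^2*P'))) := by
    nlinarith [mul_nonneg (mul_nonneg ha.le (mul_nonneg (by nlinarith : (0:ℝ) ≤ s^2 - 1)
      (by nlinarith : (0:ℝ) ≤ k^2 - 1))) (sq_nonneg (s*P - k*P'))]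
  have e2 : (s*k+1)^2 * (a * ((P+P')*(s^2*P + k^2*P')))
      ≤ (T * (s+k)^2) * (a * ((P+P')*(s^2*P + k^2*P'))) := by
    apply mul_le_mul_of_nonneg_right key
    positivity
  have e4 : (a*s^2*P + a*P')*(P + k^2*P')*(s+k)^2
      ≤ (T * ((P+P')*(a*s^2*P + a*k^2*P'))) * (s+k)^2 := by
    calc (a*s^2*P + a*P')*(P + k^2*P')*(s+k)^2
        ≤ (T * (s+k)^2) * (a * ((P+P')*(s^2*P + k^2*P'))) := le_trans e1 e2
      _ = (T * ((P+P')*(a*s^2*P + a*k^2*P'))) * (s+k)^2 := by ring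
  exact le_of_mul_le_mul_right e4 (by positivity)

lemma qelim {a b k T P P' Q Q' : ℝ} (ha : 0 < a) (hab : a ≤ b) (hk : 1 ≤ k)
    (hT1 : 1 ≤ T) (hP : 0 ≤ P) (hP' : 0 ≤ P') (hQ : 0 ≤ Q) (hQ' : 0 ≤ Q')
    (hcons : P * Q' ≤ k^2 * (P' * Q))
    (core : (b*P + a*P')*(P + k^2*P') ≤ T * ((P+P')*(b*P + a*k^2*P'))) :
    (b*P + a*P') * (Q + Q') ≤ T * ((P + P') * (b*Q + a*Q')) := by
  have hb : 0 < b := lt_of_lt_of_le ha hab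
  have hk0 : (0:ℝ) < k := lt_of_lt_of_le one_pos hk
  by_cases hP'0 : P' = 0
  · subst hP'0
    have hPQ' : P * Q' ≤ 0 := by simpa using hcons
    by_cases hP0 : P = 0
    · subst hP0; norm_num
    · have hPpos : 0 < P := lt_of_le_of_ne hP (Ne.symm hP0)
      have hQ'0 : Q' = 0 := by
        have h2 : 0 ≤ P * Q' := mul_nonneg hPpos.le hQ'
        have h3 : P * Q' = 0 := le_antisymm hPQ' h2
        exact (mul_eq_zero.mp h3).resolve_left (ne_of_gt hPpos)
      subst hQ'0
      have h1 : (b*P)*Q ≤ T*((b*P)*Q) :=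
        le_mul_of_one_le_left (by positivity) hT1
      calc (b*P + a*0) * (Q + 0) = (b*P)*Q := by ring
        _ ≤ T*((b*P)*Q) := h1
        _ = T * ((P + 0) * (b*Q + a*0)) := by ring
  · have hP'pos : 0 < P' := lt_of_le_of_ne hP' (Ne.symm hP'0)
    have hkP' : (0:ℝ) < k^2 * P' := by positivity
    set Q0 := P * Q' / (k^2 * P') with hQ0def
    have hQ0 : 0 ≤ Q0 := by positivity
    have hQ0le : Q0 ≤ Q := by
      rw [hQ0def, div_le_iff₀ hkP']
      calc P * Q' ≤ k^2 * (P' * Q) := hcons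
        _ = Q * (k^2 * P') := by ring
    have hbracket : (b*P + a*P') ≤ T * b * (P + P') := by
      have h1 : b*(P+P') ≤ T*(b*(P+P')) :=
        le_mul_of_one_le_left (by positivity) hT1
      nlinarith [mul_le_mul_of_nonneg_right hab hP']
    have h0 : (b*P + a*P') * (Q0 + Q') ≤ T * ((P + P') * (b*Q0 + a*Q')) := by
      have hmul : ((b*P + a*P') * (Q0 + Q')) * (k^2*P')
          = ((b*P+a*P')*(P + k^2*P')) * Q' := by
        rw [hQ0def]; field_simp
      have hmul2 : (T * ((P + P') * (b*Q0 + a*Q'))) * (k^2*P')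
          = (T * ((P+P')*(b*P + a*k^2*P'))) * Q' := by
        rw [hQ0def]; field_simp
      apply le_of_mul_le_mul_right _ hkP'
      rw [hmul, hmul2]
      exact mul_le_mul_of_nonneg_right core hQ'
    calc (b*P + a*P') * (Q + Q')
        = (b*P+a*P')*(Q0+Q') + (b*P+a*P')*(Q-Q0) := by ring
      _ ≤ T*((P+P')*(b*Q0+a*Q')) + (T*b*(P+P'))*(Q-Q0) :=
          add_le_add h0 (mul_le_mul_of_nonneg_right hbracket (sub_nonneg.mpr hQ0le))
      _ = T * ((P + P') * (b*Q + a*Q')) := by ring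

lemma four_var {a b P P' Q Q' k τ T : ℝ} (ha : 0 < a) (hab : a ≤ b) (hk : 1 ≤ k)
    (hP : 0 ≤ P) (hP' : 0 ≤ P') (hQ : 0 ≤ Q) (hQ' : 0 ≤ Q')
    (hcons : P * Q' ≤ k^2 * (P' * Q))
    (hτ : τ = (k - 1)/(k + 1)) (hT : T = Real.exp (τ * Real.log (b/a))) :
    (b*P + a*P') * (Q + Q') ≤ T * ((P + P') * (b*Q + a*Q')) := by
  have hb : 0 < b := lt_of_lt_of_le ha hab
  have hk0 : (0:ℝ) < k := lt_of_lt_of_le one_pos hk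
  have hτ0 : 0 ≤ τ := by rw [hτ]; apply div_nonneg <;> linarith
  have hba1 : 1 ≤ b/a := (one_le_div ha).mpr hab
  have hT1 : 1 ≤ T := by
    rw [hT]
    apply Real.one_le_exp
    exact mul_nonneg hτ0 (Real.log_nonneg hba1)
  set s := Real.sqrt (b/a) with hsdef
  have hs1 : 1 ≤ s := by
    rw [hsdef, show (1:ℝ) = Real.sqrt 1 by simp]
    exact Real.sqrt_le_sqrt hba1
  have hs0 : 0 < s := lt_of_lt_of_le one_pos hs1
  have hs2 : s^2 = b/a := Real.sq_sqrt (by positivity)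
  have hbas : b = a * s^2 := by rw [hs2]; field_simp
  have hsk : (0:ℝ) < s * k + 1 := by positivity
  have hspk : (0:ℝ) < s + k := by positivity
  have key : (s*k+1)^2 ≤ T * (s+k)^2 := by
    have hl := log_key hk hs1
    have h1 : Real.log (s*k+1) ≤ Real.log (s+k) + τ * Real.log s := by
      rw [hτ]; linarith
    have h2 : s*k+1 ≤ (s+k) * Real.exp (τ * Real.log s) := by
      have h3 := Real.exp_le_exp.mpr h1
      rw [Real.exp_log hsk, Real.exp_add, Real.exp_log hspk] at h3
      exact h3
    have hE : Real.exp (τ * Real.log s) ^ 2 = T := by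
      rw [hT, ← Real.exp_nat_mul]
      congr 1
      rw [← hs2, Real.log_pow]
      push_cast
      ring
    calc (s*k+1)^2 ≤ ((s+k) * Real.exp (τ * Real.log s))^2 := by
          apply sq_le_sq' _ h2
          nlinarith [Real.exp_pos (τ * Real.log s)]
      _ = T * (s+k)^2 := by rw [mul_pow, hE]; ring
  have core : (b*P + a*P')*(P + k^2*P') ≤ T * ((P+P')*(b*P + a*k^2*P')) := by
    rw [hbas]
    exact core_lemma ha hs1 hk hP hP' key
  exact qelim ha hab hk hT1 hP hP' hQ hQ' hcons core


lemma birkGamma_facts {N : ℕ} [Nonempty (Fin N)] {A : Matrix (Fin N) (Fin N) ℝ}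
    (hA : ∀ i j, 0 < A i j) :
    0 < birkGamma A ∧ birkGamma A ≤ 1 ∧
      ∀ i j k l, A i j * A k l ≤ ((birkGamma A)⁻¹)^2 * (A i l * A k j) := by
  set f : Fin N → Fin N → Fin N → Fin N → ℝ :=
    fun i j k l => Real.sqrt (A i j * A k l / (A i l * A k j)) with hf
  have hg : birkGamma A = ⨅ i, ⨅ j, ⨅ k, ⨅ l, f i j k l := by
    rw [birkGamma, if_pos hA]
  have hfpos : ∀ i j k l, 0 < f i j k l := by
    intro i j k l
    apply Real.sqrt_pos.mpr
    exact div_pos (mul_pos (hA i j) (hA k l)) (mul_pos (hA i l) (hA k j))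
  have hle : ∀ i j k l, birkGamma A ≤ f i j k l := by
    intro i j k l
    rw [hg]
    calc (⨅ i, ⨅ j, ⨅ k, ⨅ l, f i j k l)
        ≤ ⨅ j, ⨅ k, ⨅ l, f i j k l :=
          ciInf_le (Set.finite_range _).bddBelow i
      _ ≤ ⨅ k, ⨅ l, f i j k l := ciInf_le (Set.finite_range _).bddBelow j
      _ ≤ ⨅ l, f i j k l := ciInf_le (Set.finite_range _).bddBelow k
      _ ≤ f i j k l := ciInf_le (Set.finite_range _).bddBelow l
  have hpos : 0 < birkGamma A := by
    obtain ⟨p0, hp0⟩ := Finite.exists_min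
      (fun p : Fin N × Fin N × Fin N × Fin N => f p.1 p.2.1 p.2.2.1 p.2.2.2)
    have hlow : f p0.1 p0.2.1 p0.2.2.1 p0.2.2.2 ≤ birkGamma A := by
      rw [hg]
      exact le_ciInf fun i => le_ciInf fun j => le_ciInf fun k => le_ciInf fun l =>
        hp0 ⟨i, j, k, l⟩
    exact lt_of_lt_of_le (hfpos _ _ _ _) hlow
  have hone : birkGamma A ≤ 1 := by
    have i0 : Fin N := Classical.arbitrary _
    have h := hle i0 i0 i0 i0
    rw [hf] at h
    simp only [div_self (ne_of_gt (mul_pos (hA i0 i0) (hA i0 i0))), Real.sqrt_one] at h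
    exact h
  refine ⟨hpos, hone, ?_⟩
  intro i j k l
  have h := hle i l k j
  have hR : 0 < A i j * A k l := mul_pos (hA i j) (hA k l)
  have h2 : (birkGamma A)^2 ≤ A i l * A k j / (A i j * A k l) := by
    calc (birkGamma A)^2 ≤ (f i l k j)^2 := by
          apply pow_le_pow_left₀ hpos.le h
      _ = A i l * A k j / (A i j * A k l) := by
          rw [hf]
          exact Real.sq_sqrt (le_of_lt (div_pos (mul_pos (hA i l) (hA k j)) hR))
  rw [le_div_iff₀ hR] at h2
  have hG2 : 0 < (birkGamma A)^2 := by positivity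
  rw [show ((birkGamma A)⁻¹)^2 = ((birkGamma A)^2)⁻¹ by rw [inv_pow]]
  have h3 := mul_le_mul_of_nonneg_left h2 (inv_pos.mpr hG2).le
  rw [← mul_assoc, inv_mul_cancel₀ (ne_of_gt hG2), one_mul] at h3
  exact h3

lemma mulVec_pos' {N : ℕ} [Nonempty (Fin N)] {A : Matrix (Fin N) (Fin N) ℝ}
    (hA : ∀ i j, 0 < A i j) {x : Fin N → ℝ} (hx : Pos x) : Pos (A.mulVec x) := by
  intro i
  simp only [Matrix.mulVec, dotProduct]
  exact Finset.sum_pos (fun j _ => mul_pos (hA i j) (hx j)) Finset.univ_nonempty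

lemma birkhoff_contract {N : ℕ} [Nonempty (Fin N)] {A : Matrix (Fin N) (Fin N) ℝ}
    (hA : ∀ i j, 0 < A i j) {x y : Fin N → ℝ} (hx : Pos x) (hy : Pos y) :
    projDist (A.mulVec x) (A.mulVec y) ≤ birkTau A * projDist x y := by
  classical
  obtain ⟨hΓ0, hΓ1, hcross⟩ := birkGamma_facts hA
  set Γ := birkGamma A with hΓ
  set kk := Γ⁻¹ with hkk
  have hkk1 : 1 ≤ kk := (one_le_inv₀ hΓ0).mpr hΓ1
  have hτeq : birkTau A = (kk - 1)/(kk + 1) := by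
    rw [birkTau, ← hΓ, hkk]
    rw [div_eq_div_iff (by linarith) (by positivity)]
    field_simp
  have hAx : Pos (A.mulVec x) := mulVec_pos' hA hx
  have hAy : Pos (A.mulVec y) := mulVec_pos' hA hy
  apply pd_le hAx hAy
  intro i k0
  set T' := Real.exp (birkTau A * projDist x y) with hT'
  set S := ⨆ j, x j / y j with hS
  set I := ⨅ j, x j / y j with hI
  have hIpos : 0 < I := inf_pos (fun j => div_pos (hx j) (hy j))
  have hrb : ∀ j, I ≤ x j / y j := fun j => inf_le' (fun j => x j / y j) j
  have hrt : ∀ j, x j / y j ≤ S := fun j => le_sup (fun j => x j / y j) j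
  have hIS : I ≤ S := le_trans (hrb (Classical.arbitrary _)) (hrt _)
  set p : Fin N → ℝ := fun j => A i j * y j with hp
  set q : Fin N → ℝ := fun j => A k0 j * y j with hq
  set r : Fin N → ℝ := fun j => x j / y j with hr
  have hppos : ∀ j, 0 < p j := fun j => mul_pos (hA i j) (hy j)
  have hqpos : ∀ j, 0 < q j := fun j => mul_pos (hA k0 j) (hy j)
  have hpr : ∀ j, p j * r j = A i j * x j := by
    intro j; rw [hp, hr]; field_simp [ne_of_gt (hy j)]; try ring
  have hqr : ∀ j, q j * r j = A k0 j * x j := by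
    intro j; rw [hq, hr]; field_simp [ne_of_gt (hy j)]; try ring
  have hAxi : A.mulVec x i = ∑ j, p j * r j := by
    simp only [Matrix.mulVec, dotProduct, hpr]
  have hAxk : A.mulVec x k0 = ∑ j, q j * r j := by
    simp only [Matrix.mulVec, dotProduct, hqr]
  have hAyi : A.mulVec y i = ∑ j, p j := by
    simp only [Matrix.mulVec, dotProduct, hp]
  have hAyk : A.mulVec y k0 = ∑ j, q j := by
    simp only [Matrix.mulVec, dotProduct, hq]
  set c : Fin N → ℝ := fun j => T' * (∑ j', p j') * q j - (∑ j', q j') * p j with hc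
  set rh : Fin N → ℝ := fun j => if 0 ≤ c j then I else S with hrh
  have step1 : ∑ j, rh j * c j ≤ ∑ j, r j * c j := by
    apply Finset.sum_le_sum
    intro j _
    by_cases h : 0 ≤ c j
    · simp only [hrh, if_pos h]
      exact mul_le_mul_of_nonneg_right (hrb j) h
    · simp only [hrh, if_neg h]
      push_neg at h
      exact mul_le_mul_of_nonpos_right (hrt j) h.le
  set SA := Finset.univ.filter (fun j : Fin N => 0 ≤ c j) with hSA
  set SB := Finset.univ.filter (fun j : Fin N => ¬ 0 ≤ c j) with hSB
  set Pa := ∑ j ∈ SA, p j with hPa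
  set Pb := ∑ j ∈ SB, p j with hPb
  set Qa := ∑ j ∈ SA, q j with hQa
  set Qb := ∑ j ∈ SB, q j with hQb
  have hmemSA : ∀ j ∈ SA, 0 ≤ c j := by
    intro j hj; exact (Finset.mem_filter.mp hj).2
  have hmemSB : ∀ j ∈ SB, ¬ 0 ≤ c j := by
    intro j hj; exact (Finset.mem_filter.mp hj).2
  have hsplit : ∀ F : Fin N → ℝ, ∑ j, F j = ∑ j ∈ SA, F j + ∑ j ∈ SB, F j :=
    fun F => (Finset.sum_filter_add_sum_filter_not _ _ _).symm
  have hrhp : ∑ j, rh j * p j = I * Pa + S * Pb := by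
    rw [hsplit (fun j => rh j * p j), hPa, hPb, Finset.mul_sum, Finset.mul_sum]
    congr 1
    · apply Finset.sum_congr rfl
      intro j hj
      simp only [hrh, if_pos (hmemSA j hj)]
    · apply Finset.sum_congr rfl
      intro j hj
      simp only [hrh, if_neg (hmemSB j hj)]
  have hrhq : ∑ j, rh j * q j = I * Qa + S * Qb := by
    rw [hsplit (fun j => rh j * q j), hQa, hQb, Finset.mul_sum, Finset.mul_sum]
    congr 1
    · apply Finset.sum_congr rfl
      intro j hj
      simp only [hrh, if_pos (hmemSA j hj)]
    · apply Finset.sum_congr rfl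
      intro j hj
      simp only [hrh, if_neg (hmemSB j hj)]
  have hPsum : ∑ j, p j = Pa + Pb := hsplit p
  have hQsum : ∑ j, q j = Qa + Qb := hsplit q
  have hPa0 : 0 ≤ Pa := Finset.sum_nonneg fun j _ => (hppos j).le
  have hPb0 : 0 ≤ Pb := Finset.sum_nonneg fun j _ => (hppos j).le
  have hQa0 : 0 ≤ Qa := Finset.sum_nonneg fun j _ => (hqpos j).le
  have hQb0 : 0 ≤ Qb := Finset.sum_nonneg fun j _ => (hqpos j).le
  have hcons : Pb * Qa ≤ kk^2 * (Pa * Qb) := by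
    have hpoint : ∀ j l, p j * q l ≤ kk^2 * (p l * q j) := by
      intro j l
      have h1 := hcross i j k0 l
      have h2 := mul_le_mul_of_nonneg_right h1 (mul_pos (hy j) (hy l)).le
      calc p j * q l = A i j * A k0 l * (y j * y l) := by rw [hp, hq]; ring
        _ ≤ kk^2 * (A i l * A k0 j) * (y j * y l) := h2
        _ = kk^2 * (p l * q j) := by rw [hp, hq]; ring
    calc Pb * Qa = ∑ j ∈ SB, ∑ l ∈ SA, p j * q l := by
          rw [hPb, hQa]; exact Finset.sum_mul_sum SB SA p q
      _ ≤ ∑ j ∈ SB, ∑ l ∈ SA, kk^2 * (p l * q j) := by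
          apply Finset.sum_le_sum
          intro j _
          apply Finset.sum_le_sum
          intro l _
          exact hpoint j l
      _ = kk^2 * (Pa * Qb) := by
          rw [hPa, hQb, Finset.sum_mul_sum SA SB p q]
          simp only [Finset.mul_sum]
          exact Finset.sum_comm
  have hTfv : T' = Real.exp (birkTau A * Real.log (S / I)) := rfl
  have fv := four_var (a := I) (b := S) (P := Pb) (P' := Pa) (Q := Qb) (Q' := Qa)
    (k := kk) (τ := birkTau A) (T := T') hIpos hIS hkk1 hPb0 hPa0 hQb0 hQa0 hcons
    hτeq hTfv
  have step2 : 0 ≤ ∑ j, rh j * c j := by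
    have expand : ∑ j, rh j * c j
        = T' * ((Pa + Pb) * (I*Qa + S*Qb)) - (Qa + Qb) * (I*Pa + S*Pb) := by
      calc ∑ j, rh j * c j
          = ∑ j, ((T' * (∑ j', p j')) * (rh j * q j) - (∑ j', q j') * (rh j * p j)) := by
            apply Finset.sum_congr rfl
            intro j _
            rw [hc]; ring
        _ = (T' * (∑ j', p j')) * (∑ j, rh j * q j)
            - (∑ j', q j') * (∑ j, rh j * p j) := by
            rw [Finset.sum_sub_distrib, ← Finset.mul_sum, ← Finset.mul_sum]
        _ = _ := by rw [hrhp, hrhq, hPsum, hQsum]; ring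
    rw [expand, sub_nonneg]
    nlinarith [fv]
  have step3 : 0 ≤ ∑ j, r j * c j := le_trans step2 step1
  have expand2 : ∑ j, r j * c j
      = T' * (A.mulVec y i * A.mulVec x k0) - A.mulVec y k0 * A.mulVec x i := by
    calc ∑ j, r j * c j
        = ∑ j, ((T' * (∑ j', p j')) * (q j * r j) - (∑ j', q j') * (p j * r j)) := by
          apply Finset.sum_congr rfl
          intro j _
          rw [hc]; ring
      _ = (T' * (∑ j', p j')) * (∑ j, q j * r j)
          - (∑ j', q j') * (∑ j, p j * r j) := by
          rw [Finset.sum_sub_distrib, ← Finset.mul_sum, ← Finset.mul_sum]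
      _ = _ := by rw [← hAxi, ← hAxk, ← hAyi, ← hAyk]; ring
  rw [expand2] at step3
  linarith


section MainLemmas

variable {N : ℕ}

lemma pow_entry_nonneg {M : Matrix (Fin N) (Fin N) ℝ} (hM : ∀ i j, 0 ≤ M i j) :
    ∀ n i j, 0 ≤ (M ^ n) i j := by
  intro n
  induction n with
  | zero =>
    intro i j
    rw [pow_zero]
    by_cases h : i = j <;> simp [Matrix.one_apply, h]
  | succ n ih =>
    intro i j
    rw [pow_succ, Matrix.mul_apply]
    exact Finset.sum_nonneg fun l _ => mul_nonneg (ih i l) (hM l j)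

lemma row_pos [Nonempty (Fin N)] {M : Matrix (Fin N) (Fin N) ℝ} (hM : ∀ i j, 0 ≤ M i j)
    {ℓ : ℕ} (hl : 0 < ℓ) (hpos : ∀ i j, 0 < (M ^ ℓ) i j) :
    ∀ i, ∃ j, 0 < M i j := by
  intro i
  by_contra h
  push_neg at h
  have hz : ∀ j, M i j = 0 := fun j => le_antisymm (h j) (hM i j)
  obtain ⟨n, rfl⟩ := Nat.exists_eq_succ_of_ne_zero (Nat.pos_iff_ne_zero.mp hl)
  have i0 : Fin N := Classical.arbitrary _
  have hzero : (M ^ (n+1)) i i0 = 0 := by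
    rw [pow_succ', Matrix.mul_apply]
    apply Finset.sum_eq_zero
    intro l _
    rw [hz l, zero_mul]
  exact absurd (hpos i i0) (by rw [hzero]; exact lt_irrefl 0)

lemma mulVec_pos_of_row [Nonempty (Fin N)] {M : Matrix (Fin N) (Fin N) ℝ}
    (hM : ∀ i j, 0 ≤ M i j) (hrow : ∀ i, ∃ j, 0 < M i j) {x : Fin N → ℝ} (hx : Pos x) :
    Pos (M.mulVec x) := by
  intro i
  obtain ⟨j, hj⟩ := hrow i
  simp only [Matrix.mulVec, dotProduct]
  apply Finset.sum_pos'
  · exact fun l _ => mul_nonneg (hM i l) (hx l).le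
  · exact ⟨j, Finset.mem_univ j, mul_pos hj (hx j)⟩

lemma pow_mulVec_pos [Nonempty (Fin N)] {M : Matrix (Fin N) (Fin N) ℝ}
    (hM : ∀ i j, 0 ≤ M i j) (hrow : ∀ i, ∃ j, 0 < M i j) {x : Fin N → ℝ} (hx : Pos x) :
    ∀ n, Pos ((M ^ n).mulVec x) := by
  intro n
  induction n with
  | zero => rw [pow_zero, Matrix.one_mulVec]; exact hx
  | succ n ih =>
    rw [pow_succ', ← Matrix.mulVec_mulVec]
    exact mulVec_pos_of_row hM hrow ih

lemma nonexpansive [Nonempty (Fin N)] {M : Matrix (Fin N) (Fin N) ℝ}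
    (hM : ∀ i j, 0 ≤ M i j) (hrow : ∀ i, ∃ j, 0 < M i j)
    {x y : Fin N → ℝ} (hx : Pos x) (hy : Pos y) :
    projDist (M.mulVec x) (M.mulVec y) ≤ projDist x y := by
  have hMx := mulVec_pos_of_row hM hrow hx
  have hMy := mulVec_pos_of_row hM hrow hy
  apply pd_le hMx hMy
  intro i k
  have spec := pd_spec hx hy
  set E := Real.exp (projDist x y) with hE
  have expand : M.mulVec x i * M.mulVec y k = ∑ j, ∑ l, (M i j * M k l) * (x j * y l) := by
    simp only [Matrix.mulVec, dotProduct]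
    rw [Finset.sum_mul_sum]
    apply Finset.sum_congr rfl
    intro j _
    apply Finset.sum_congr rfl
    intro l _
    ring
  have expand2 : M.mulVec y i * M.mulVec x k = ∑ j, ∑ l, (M i j * M k l) * (y j * x l) := by
    simp only [Matrix.mulVec, dotProduct]
    rw [Finset.sum_mul_sum]
    apply Finset.sum_congr rfl
    intro j _
    apply Finset.sum_congr rfl
    intro l _
    ring
  rw [expand, expand2, Finset.mul_sum]
  apply Finset.sum_le_sum
  intro j _
  rw [Finset.mul_sum]
  apply Finset.sum_le_sum
  intro l _
  have hsjl := spec j l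
  have hMnn : 0 ≤ M i j * M k l := mul_nonneg (hM i j) (hM k l)
  calc (M i j * M k l) * (x j * y l) ≤ (M i j * M k l) * (E * (y j * x l)) :=
        mul_le_mul_of_nonneg_left hsjl hMnn
    _ = E * ((M i j * M k l) * (y j * x l)) := by ring

lemma birkTau_nonneg [Nonempty (Fin N)] {A : Matrix (Fin N) (Fin N) ℝ}
    (hA : ∀ i j, 0 < A i j) : 0 ≤ birkTau A := by
  obtain ⟨h0, h1, _⟩ := birkGamma_facts hA
  rw [birkTau]
  apply div_nonneg <;> linarith

lemma birkTau_lt_one [Nonempty (Fin N)] {A : Matrix (Fin N) (Fin N) ℝ}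
    (hA : ∀ i j, 0 < A i j) : birkTau A < 1 := by
  obtain ⟨h0, h1, _⟩ := birkGamma_facts hA
  rw [birkTau, div_lt_one (by linarith)]
  linarith

lemma iter_contract [Nonempty (Fin N)] {A : Matrix (Fin N) (Fin N) ℝ}
    (hA : ∀ i j, 0 < A i j) {x y : Fin N → ℝ} (hx : Pos x) (hy : Pos y) :
    ∀ n, projDist ((A ^ n).mulVec x) ((A ^ n).mulVec y) ≤ (birkTau A) ^ n * projDist x y := by
  have hτ0 := birkTau_nonneg hA
  have hMnn : ∀ i j, 0 ≤ A i j := fun i j => (hA i j).le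
  have hrow : ∀ i : Fin N, ∃ j, 0 < A i j := fun i => ⟨i, hA i i⟩
  intro n
  induction n with
  | zero => simp [Matrix.one_mulVec]
  | succ n ih =>
    have hxn := pow_mulVec_pos hMnn hrow hx n
    have hyn := pow_mulVec_pos hMnn hrow hy n
    rw [pow_succ' A, ← Matrix.mulVec_mulVec, ← Matrix.mulVec_mulVec]
    calc projDist (A.mulVec ((A ^ n).mulVec x)) (A.mulVec ((A ^ n).mulVec y))
        ≤ birkTau A * projDist ((A ^ n).mulVec x) ((A ^ n).mulVec y) :=
          birkhoff_contract hA hxn hyn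
      _ ≤ birkTau A * ((birkTau A) ^ n * projDist x y) :=
          mul_le_mul_of_nonneg_left ih hτ0
      _ = (birkTau A) ^ (n+1) * projDist x y := by ring

lemma iter_nonexp [Nonempty (Fin N)] {M : Matrix (Fin N) (Fin N) ℝ}
    (hM : ∀ i j, 0 ≤ M i j) (hrow : ∀ i, ∃ j, 0 < M i j)
    {x y : Fin N → ℝ} (hx : Pos x) (hy : Pos y) :
    ∀ n, projDist ((M ^ n).mulVec x) ((M ^ n).mulVec y) ≤ projDist x y := by
  intro n
  induction n with
  | zero => simp [Matrix.one_mulVec]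
  | succ n ih =>
    have hxn := pow_mulVec_pos hM hrow hx n
    have hyn := pow_mulVec_pos hM hrow hy n
    rw [pow_succ' M, ← Matrix.mulVec_mulVec, ← Matrix.mulVec_mulVec]
    exact le_trans (nonexpansive hM hrow hxn hyn) ih

lemma pow_mulVec_eig {M : Matrix (Fin N) (Fin N) ℝ} {ρ : ℝ} {v : Fin N → ℝ}
    (heig : M.mulVec v = ρ • v) : ∀ n, (M ^ n).mulVec v = (ρ ^ n) • v := by
  intro n
  induction n with
  | zero => simp [Matrix.one_mulVec]
  | succ n ih =>
    rw [pow_succ', ← Matrix.mulVec_mulVec, ih, Matrix.mulVec_smul, heig, smul_smul,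
      ← pow_succ]

lemma pow_vecMul_eig {M : Matrix (Fin N) (Fin N) ℝ} {ρ : ℝ} {w : Fin N → ℝ}
    (hweig : Matrix.vecMul w M = ρ • w) : ∀ n, Matrix.vecMul w (M ^ n) = (ρ ^ n) • w := by
  intro n
  induction n with
  | zero => simp [Matrix.vecMul_one]
  | succ n ih =>
    rw [pow_succ, ← Matrix.vecMul_vecMul, ih, Matrix.smul_vecMul, hweig, smul_smul,
      ← pow_succ]

lemma perron_sandwich [Nonempty (Fin N)] {z v w : Fin N → ℝ}
    (hz : Pos z) (hv : Pos v) (hw : Pos w)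
    (hnorm : dotProduct w v = 1) (i : Fin N) :
    Real.exp (-(projDist z v)) ≤ z i / (dotProduct w z * v i) ∧
    z i / (dotProduct w z * v i) ≤ Real.exp (projDist z v) := by
  set d := projDist z v with hd
  have spec := pd_spec hz hv
  have hed : Real.exp (-d) * Real.exp d = 1 := by
    rw [← Real.exp_add]; simp
  have hA1 : dotProduct w z * v i ≤ Real.exp d * z i := by
    rw [dotProduct, Finset.sum_mul]
    calc ∑ k, w k * z k * v i ≤ ∑ k, w k * (Real.exp d * (v k * z i)) := by
          apply Finset.sum_le_sum
          intro k _
          have := spec k i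
          calc w k * z k * v i = w k * (z k * v i) := by ring
            _ ≤ w k * (Real.exp d * (v k * z i)) :=
              mul_le_mul_of_nonneg_left this (hw k).le
      _ = (Real.exp d * z i) * ∑ k, w k * v k := by
          rw [Finset.mul_sum]
          apply Finset.sum_congr rfl
          intro k _
          ring
      _ = Real.exp d * z i := by
          rw [show ∑ k, w k * v k = dotProduct w v from rfl, hnorm, mul_one]
  have hA2 : Real.exp (-d) * z i ≤ dotProduct w z * v i := by
    rw [dotProduct, Finset.sum_mul]
    calc Real.exp (-d) * z i = (Real.exp (-d) * z i) * ∑ k, w k * v k := by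
          rw [show ∑ k, w k * v k = dotProduct w v from rfl, hnorm, mul_one]
      _ = ∑ k, w k * (Real.exp (-d) * (z i * v k)) := by
          rw [Finset.mul_sum]
          apply Finset.sum_congr rfl
          intro k _
          ring
      _ ≤ ∑ k, w k * z k * v i := by
          apply Finset.sum_le_sum
          intro k _
          have hs := spec i k
          have h2 : Real.exp (-d) * (z i * v k) ≤ Real.exp (-d) * (Real.exp d * (v i * z k)) :=
            mul_le_mul_of_nonneg_left hs (Real.exp_pos _).le
          calc w k * (Real.exp (-d) * (z i * v k))
              ≤ w k * (Real.exp (-d) * (Real.exp d * (v i * z k))) :=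
                mul_le_mul_of_nonneg_left h2 (hw k).le
            _ = (Real.exp (-d) * Real.exp d) * (w k * (v i * z k)) := by ring
            _ = w k * z k * v i := by rw [hed]; ring
  have hwz : 0 < dotProduct w z := by
    rw [dotProduct]
    exact Finset.sum_pos (fun k _ => mul_pos (hw k) (hz k)) Finset.univ_nonempty
  have hApos : 0 < dotProduct w z * v i := mul_pos hwz (hv i)
  constructor
  · rw [le_div_iff₀ hApos]
    calc Real.exp (-d) * (dotProduct w z * v i)
        ≤ Real.exp (-d) * (Real.exp d * z i) :=
          mul_le_mul_of_nonneg_left hA1 (Real.exp_pos _).le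
      _ = (Real.exp (-d) * Real.exp d) * z i := by ring
      _ = z i := by rw [hed, one_mul]
  · rw [div_le_iff₀ hApos]
    calc z i = (Real.exp (-d) * Real.exp d) * z i := by rw [hed, one_mul]
      _ = Real.exp d * (Real.exp (-d) * z i) := by ring
      _ ≤ Real.exp d * (dotProduct w z * v i) :=
          mul_le_mul_of_nonneg_left hA2 (Real.exp_pos _).le

end MainLemmas

section FinalLemmas

variable {N : ℕ}

lemma iterate_FM [Nonempty (Fin N)] {M : Matrix (Fin N) (Fin N) ℝ}
    (hM : ∀ i j, 0 ≤ M i j) (hrow : ∀ i, ∃ j, 0 < M i j)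
    {x : Fin N → ℝ} (hx : Pos x) :
    ∀ n, ∃ c : ℝ, 0 < c ∧ (FM M)^[n] x = c • ((M ^ n).mulVec x) := by
  intro n
  induction n with
  | zero =>
    refine ⟨1, one_pos, ?_⟩
    simp [Matrix.one_mulVec]
  | succ n ih =>
    obtain ⟨c, hc, hcn⟩ := ih
    have hz1 : Pos ((M ^ (n+1)).mulVec x) := pow_mulVec_pos hM hrow hx (n+1)
    have hS : 0 < ∑ j, (M ^ (n+1)).mulVec x j :=
      Finset.sum_pos (fun j _ => hz1 j) Finset.univ_nonempty
    refine ⟨(∑ j, (M ^ (n+1)).mulVec x j)⁻¹, inv_pos.mpr hS, ?_⟩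
    rw [Function.iterate_succ_apply', hcn]
    funext i
    simp only [FM, Matrix.mulVec_smul, Pi.smul_apply, smul_eq_mul]
    rw [← Finset.mul_sum, Matrix.mulVec_mulVec, ← pow_succ']
    rw [mul_div_mul_left _ _ (ne_of_gt hc), div_eq_inv_mul]

lemma dxA_le_dMin [Nonempty (Fin N)] {M : Matrix (Fin N) (Fin N) ℝ}
    (hM : ∀ i j, 0 ≤ M i j) (hrow : ∀ i, ∃ j, 0 < M i j)
    {x : Fin N → ℝ} (hx : Pos x) (ℓ : ℕ) :
    projDist x ((M ^ ℓ).mulVec x) ≤ dMin M ℓ x := by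
  have hFM1 : projDist x (FM M x) = projDist x (M.mulVec x) := by
    obtain ⟨c, hc, hceq⟩ := iterate_FM hM hrow hx 1
    rw [Function.iterate_one, pow_one] at hceq
    rw [hceq]
    exact projDist_smul_right hx (mulVec_pos_of_row hM hrow hx) hc
  have chain : ∀ n : ℕ, projDist x ((M ^ n).mulVec x) ≤ (n : ℝ) * projDist x (M.mulVec x) := by
    intro n
    induction n with
    | zero =>
      simp only [pow_zero, Matrix.one_mulVec, Nat.cast_zero, zero_mul]
      exact projDist_self hx
    | succ n ih =>
      have hMx := mulVec_pos_of_row hM hrow hx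
      have hxn := pow_mulVec_pos hM hrow hx n
      have hxn1 := pow_mulVec_pos hM hrow hx (n+1)
      have step : projDist (M.mulVec x) ((M ^ (n+1)).mulVec x)
          ≤ projDist x ((M ^ n).mulVec x) := by
        rw [pow_succ', ← Matrix.mulVec_mulVec]
        exact nonexpansive hM hrow hx hxn
      calc projDist x ((M ^ (n+1)).mulVec x)
          ≤ projDist x (M.mulVec x) + projDist (M.mulVec x) ((M ^ (n+1)).mulVec x) :=
            projDist_triangle hx hMx hxn1
        _ ≤ projDist x (M.mulVec x) + (n : ℝ) * projDist x (M.mulVec x) := by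
            linarith [le_trans step ih]
        _ = ((n+1 : ℕ) : ℝ) * projDist x (M.mulVec x) := by push_cast; ring
  have h2 : projDist x ((FM M)^[ℓ] x) = projDist x ((M ^ ℓ).mulVec x) := by
    obtain ⟨c, hc, hceq⟩ := iterate_FM hM hrow hx ℓ
    rw [hceq]
    exact projDist_smul_right hx (pow_mulVec_pos hM hrow hx ℓ) hc
  have h1 : projDist x ((M ^ ℓ).mulVec x) ≤ (ℓ : ℝ) * projDist x (FM M x) := by
    rw [hFM1]
    exact chain ℓ
  rw [dMin]
  exact le_min h1 (le_of_eq h2.symm)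

lemma telescope [Nonempty (Fin N)] {M : Matrix (Fin N) (Fin N) ℝ}
    (hM : ∀ i j, 0 ≤ M i j) {ℓ : ℕ} (hl : 0 < ℓ)
    (hA : ∀ i j, 0 < (M ^ ℓ) i j)
    {ρ : ℝ} (hρ : 0 < ρ) {v : Fin N → ℝ} (hv : Pos v) (heig : M.mulVec v = ρ • v)
    {x : Fin N → ℝ} (hx : Pos x) :
    ∀ n j, projDist (((M ^ ℓ) ^ j).mulVec x) v
      ≤ projDist x ((M ^ ℓ).mulVec x) * (∑ i ∈ Finset.range n, (birkTau (M ^ ℓ)) ^ (j+i))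
        + (birkTau (M ^ ℓ)) ^ (j+n) * projDist x v := by
  have hrow := row_pos hM hl hA
  have hAnn : ∀ i j, 0 ≤ (M ^ ℓ) i j := fun i j => (hA i j).le
  have hArow : ∀ i : Fin N, ∃ j, 0 < (M ^ ℓ) i j := fun i => ⟨i, hA i i⟩
  set τ := birkTau (M ^ ℓ) with hτ
  have hτ0 := birkTau_nonneg hA
  have base : ∀ j, projDist (((M ^ ℓ) ^ j).mulVec x) v ≤ τ ^ j * projDist x v := by
    intro j
    have hAvj : ((M ^ ℓ) ^ j).mulVec v = (ρ ^ (ℓ * j)) • v := by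
      rw [← pow_mul]
      exact pow_mulVec_eig heig (ℓ * j)
    have hxj := pow_mulVec_pos hAnn hArow hx j
    have heq : projDist (((M ^ ℓ) ^ j).mulVec x) v
        = projDist (((M ^ ℓ) ^ j).mulVec x) (((M ^ ℓ) ^ j).mulVec v) := by
      rw [hAvj, projDist_smul_right hxj hv (by positivity)]
    rw [heq]
    exact iter_contract hA hx hv j
  intro n
  induction n with
  | zero =>
    intro j
    simpa using base j
  | succ n ih =>
    intro j
    have hxj := pow_mulVec_pos hAnn hArow hx j
    have hxj1 := pow_mulVec_pos hAnn hArow hx (j+1)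
    have hstep : projDist (((M ^ ℓ) ^ j).mulVec x) (((M ^ ℓ) ^ (j+1)).mulVec x)
        ≤ τ ^ j * projDist x ((M ^ ℓ).mulVec x) := by
      have hmid : ((M ^ ℓ) ^ (j+1)).mulVec x = ((M ^ ℓ) ^ j).mulVec ((M ^ ℓ).mulVec x) := by
        rw [pow_succ, ← Matrix.mulVec_mulVec]
      rw [hmid]
      exact iter_contract hA hx (mulVec_pos_of_row hAnn hArow hx) j
    have ihj := ih (j+1)
    calc projDist (((M ^ ℓ) ^ j).mulVec x) v
        ≤ projDist (((M ^ ℓ) ^ j).mulVec x) (((M ^ ℓ) ^ (j+1)).mulVec x)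
          + projDist (((M ^ ℓ) ^ (j+1)).mulVec x) v :=
          projDist_triangle hxj hxj1 hv
      _ ≤ τ ^ j * projDist x ((M ^ ℓ).mulVec x)
          + (projDist x ((M ^ ℓ).mulVec x) * (∑ i ∈ Finset.range n, τ ^ (j+1+i))
            + τ ^ (j+1+n) * projDist x v) := by
          linarith [hstep, ihj]
      _ = projDist x ((M ^ ℓ).mulVec x) * (τ ^ j + ∑ i ∈ Finset.range n, τ ^ (j+1+i))
          + τ ^ (j+(n+1)) * projDist x v := by
          rw [show j+1+n = j+(n+1) by omega]
          ring
      _ = projDist x ((M ^ ℓ).mulVec x) * (∑ i ∈ Finset.range (n+1), τ ^ (j+i))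
          + τ ^ (j+(n+1)) * projDist x v := by
          congr 2
          rw [Finset.sum_range_succ' (fun i => τ ^ (j+i)) n]
          simp only [Nat.add_zero]
          rw [add_comm]
          congr 1
          apply Finset.sum_congr rfl
          intro i _
          congr 1
          omega

lemma main_dist_bound [Nonempty (Fin N)] {M : Matrix (Fin N) (Fin N) ℝ}
    (hM : ∀ i j, 0 ≤ M i j) {ℓ : ℕ} (hl : 0 < ℓ)
    (hA : ∀ i j, 0 < (M ^ ℓ) i j)
    {ρ : ℝ} (hρ : 0 < ρ) {v : Fin N → ℝ} (hv : Pos v) (heig : M.mulVec v = ρ • v)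
    {x : Fin N → ℝ} (hx : Pos x) (m : ℕ) :
    projDist ((M ^ m).mulVec x) v
      ≤ (birkTau (M ^ ℓ)) ^ (m / ℓ) * dMin M ℓ x / (1 - birkTau (M ^ ℓ)) := by
  have hrow := row_pos hM hl hA
  have hAnn : ∀ i j, 0 ≤ (M ^ ℓ) i j := fun i j => (hA i j).le
  have hArow : ∀ i : Fin N, ∃ j, 0 < (M ^ ℓ) i j := fun i => ⟨i, hA i i⟩
  set τ := birkTau (M ^ ℓ) with hτdef
  have hτ0 := birkTau_nonneg hA
  have hτ1 := birkTau_lt_one hA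
  have h1τ : 0 < 1 - τ := by linarith
  set q := m / ℓ with hq
  set r := m % ℓ with hr
  set D := dMin M ℓ x with hD
  have hdxA : projDist x ((M ^ ℓ).mulVec x) ≤ D := dxA_le_dMin hM hrow hx ℓ
  have hdxA0 : 0 ≤ projDist x ((M ^ ℓ).mulVec x) :=
    projDist_nonneg hx (pow_mulVec_pos hM hrow hx ℓ)
  have hD0 : 0 ≤ D := le_trans hdxA0 hdxA
  -- step 1: reduce M^m to A^q
  have hsplit : (M ^ m).mulVec x = (M ^ r).mulVec (((M ^ ℓ) ^ q).mulVec x) := by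
    have hm : m = r + ℓ * q := by rw [hq, hr]; exact (Nat.mod_add_div m ℓ).symm
    rw [Matrix.mulVec_mulVec, ← pow_mul, ← pow_add, ← hm]
  have hxq := pow_mulVec_pos hAnn hArow hx q
  have d1 : projDist ((M ^ m).mulVec x) v ≤ projDist (((M ^ ℓ) ^ q).mulVec x) v := by
    rw [hsplit]
    have hMrv : (M ^ r).mulVec v = (ρ ^ r) • v := pow_mulVec_eig heig r
    have hMru := pow_mulVec_pos hM hrow hxq r
    have heq : projDist ((M ^ r).mulVec (((M ^ ℓ) ^ q).mulVec x)) v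
        = projDist ((M ^ r).mulVec (((M ^ ℓ) ^ q).mulVec x)) ((M ^ r).mulVec v) := by
      rw [hMrv, projDist_smul_right hMru hv (by positivity)]
    rw [heq]
    exact iter_nonexp hM hrow hxq hv r
  -- step 2: geometric bound
  have hgeom : ∀ n, (∑ i ∈ Finset.range n, τ ^ i) ≤ 1 / (1 - τ) := by
    intro n
    rw [geom_sum_eq (ne_of_lt hτ1) n]
    rw [show (τ ^ n - 1)/(τ - 1) = (1 - τ ^ n)/(1 - τ) by
      rw [div_eq_div_iff (by linarith) (by linarith)]; ring]
    exact (div_le_div_iff_of_pos_right h1τ).mpr (by nlinarith [pow_nonneg hτ0 n])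
  have hsum : ∀ n, projDist x ((M ^ ℓ).mulVec x) * (∑ i ∈ Finset.range n, τ ^ (q+i))
      ≤ D * (τ ^ q * (1/(1-τ))) := by
    intro n
    have e1 : (∑ i ∈ Finset.range n, τ ^ (q+i)) = τ ^ q * ∑ i ∈ Finset.range n, τ ^ i := by
      rw [Finset.mul_sum]
      apply Finset.sum_congr rfl
      intro i _
      rw [pow_add]
    rw [e1]
    have h2 : τ ^ q * (∑ i ∈ Finset.range n, τ ^ i) ≤ τ ^ q * (1/(1-τ)) :=
      mul_le_mul_of_nonneg_left (hgeom n) (pow_nonneg hτ0 q)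
    have h3 : 0 ≤ τ ^ q * (∑ i ∈ Finset.range n, τ ^ i) :=
      mul_nonneg (pow_nonneg hτ0 q)
        (Finset.sum_nonneg fun i _ => pow_nonneg hτ0 i)
    calc projDist x ((M ^ ℓ).mulVec x) * (τ ^ q * ∑ i ∈ Finset.range n, τ ^ i)
        ≤ D * (τ ^ q * ∑ i ∈ Finset.range n, τ ^ i) :=
          mul_le_mul_of_nonneg_right hdxA h3
      _ ≤ D * (τ ^ q * (1/(1-τ))) := mul_le_mul_of_nonneg_left h2 hD0
  have hbound : ∀ n, projDist (((M ^ ℓ) ^ q).mulVec x) v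
      ≤ D * (τ ^ q * (1/(1-τ))) + (τ ^ q * projDist x v) * τ ^ n := by
    intro n
    have ht := telescope hM hl hA hρ hv heig hx n q
    have ht' : projDist (((M ^ ℓ) ^ q).mulVec x) v
        ≤ projDist x ((M ^ ℓ).mulVec x) * (∑ i ∈ Finset.range n, τ ^ (q+i))
          + (τ ^ q * projDist x v) * τ ^ n := by
      rw [show (τ ^ q * projDist x v) * τ ^ n = τ ^ (q+n) * projDist x v by
        rw [pow_add]; ring]
      exact ht
    linarith [hsum n, ht']
  have htend : Filter.Tendsto
      (fun n : ℕ => D * (τ ^ q * (1/(1-τ))) + (τ ^ q * projDist x v) * τ ^ n)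
      Filter.atTop (nhds (D * (τ ^ q * (1/(1-τ))))) := by
    have h0 : Filter.Tendsto (fun n : ℕ => τ ^ n) Filter.atTop (nhds 0) :=
      tendsto_pow_atTop_nhds_zero_of_lt_one hτ0 hτ1
    have h1 := h0.const_mul (τ ^ q * projDist x v)
    simpa using h1.const_add (D * (τ ^ q * (1/(1-τ))))
  have dq : projDist (((M ^ ℓ) ^ q).mulVec x) v ≤ D * (τ ^ q * (1/(1-τ))) :=
    ge_of_tendsto' htend hbound
  calc projDist ((M ^ m).mulVec x) v ≤ D * (τ ^ q * (1/(1-τ))) := le_trans d1 dq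
    _ = τ ^ q * D / (1-τ) := by ring

end FinalLemmas

/-- entrywise estimate of the powers of a primitive matrix:
`(M^m x)(i) = ρ_M^m (w_M⊤x) v_M(i) · exp(± τ^{⌊m/ℓ⌋} d_M(x)/(1−τ))`. -/
theorem power_matrix_perron_estimate
    {N : ℕ} (hN : 0 < N) (M : Matrix (Fin N) (Fin N) ℝ)
    (hMnn : ∀ i j, 0 ≤ M i j) (ℓ : ℕ) (hprim : PrimIndex M ℓ)
    (ρ : ℝ) (hρ : 0 < ρ) (v : Fin N → ℝ) (hv : v ∈ simplex N)
    (heig : M.mulVec v = ρ • v)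
    (w : Fin N → ℝ) (hw : ∀ i, 0 < w i)
    (hweig : Matrix.vecMul w M = ρ • w)
    (hnorm : dotProduct w v = 1)
    (x : Fin N → ℝ) (hx : x ∈ simplex N) (m : ℕ) (i : Fin N) :
    Real.exp (-(birkTau (M ^ ℓ) ^ (m / ℓ) * dMin M ℓ x / (1 - birkTau (M ^ ℓ)))) ≤
      (M ^ m).mulVec x i / (ρ ^ m * dotProduct w x * v i) ∧
    (M ^ m).mulVec x i / (ρ ^ m * dotProduct w x * v i) ≤
      Real.exp (birkTau (M ^ ℓ) ^ (m / ℓ) * dMin M ℓ x / (1 - birkTau (M ^ ℓ))) := by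
  haveI : Nonempty (Fin N) := ⟨⟨0, hN⟩⟩
  obtain ⟨hl, hApos, _⟩ := hprim
  have hvpos : Pos v := hv.1
  have hxpos : Pos x := hx.1
  have hrow := row_pos hMnn hl hApos
  have hz : Pos ((M ^ m).mulVec x) := pow_mulVec_pos hMnn hrow hxpos m
  have hwz : dotProduct w ((M ^ m).mulVec x) = ρ ^ m * dotProduct w x := by
    rw [Matrix.dotProduct_mulVec, pow_vecMul_eig hweig m, smul_dotProduct,
      smul_eq_mul]
  have hsand := perron_sandwich hz hvpos hw hnorm i
  have hdb := main_dist_bound hMnn hl hApos hρ hvpos heig hxpos m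
  have hrw : ρ ^ m * dotProduct w x * v i
      = dotProduct w ((M ^ m).mulVec x) * v i := by rw [hwz]
  rw [hrw]
  constructor
  · exact le_trans (Real.exp_le_exp.mpr (neg_le_neg hdb)) hsand.1
  · exact le_trans hsand.2 (Real.exp_le_exp.mpr hdb)

end PerronApprox
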